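/- (Frobenius Reciprocity / projection formula) Let k be a commutative ring, G a group, and H ≤ G a subgroup. For every k-linear representation V of G and every k-linear representation W of H, there is an isomorphism of representations of G: V ⊗ Ind^G_H(W) ≅ Ind^G_H(Res^G_H(V) ⊗ W), where ⊗ is the tensor product over k with diagonal action. -/

import Mathlib

open CategoryTheory MonoidalCategory

/-- Frobenius reciprocity (projection formula): for a subgroup `H ≤ G`, a commutative ring `k`,
an induction functor `Ind^G_H` (i.e. any left adjoint of the restriction functor
`Res^G_H : Rep k G ⥤ Rep k H`), a representation `V` of `G` and a representation `W` of `H`,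
there is an isomorphism of representations of `G`:
`V ⊗ Ind^G_H W ≅ Ind^G_H (Res^G_H V ⊗ W)`. -/
theorem stmt8 (k : Type) [CommRing k] {G : Type} [Group G] (H : Subgroup G)
    (Ind : Rep k ↥H ⥤ Rep k G)
    (adj : Ind ⊣ Rep.resFunctor H.subtype)
    (V : Rep k G) (W : Rep k ↥H) :
    Nonempty (V ⊗ Ind.obj W ≅
      Ind.obj ((Rep.resFunctor H.subtype).obj V ⊗ W)) := by
  set Res := Rep.resFunctor (k := k) H.subtype with hRes
  -- restriction commutes with internal hom
  have iso : (ihom V ⋙ Res) ≅ (Res ⋙ ihom (Res.obj V)) := by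
    refine NatIso.ofComponents (fun X => eqToIso rfl) ?_
    · intro X Y f
      rfl
  have adj1 : (Ind ⋙ tensorLeft V) ⊣ (Res ⋙ ihom (Res.obj V)) :=
    (adj.comp (ihom.adjunction V)).ofNatIsoRight iso
  have adj2 : (tensorLeft (Res.obj V) ⋙ Ind) ⊣ (Res ⋙ ihom (Res.obj V)) :=
    (ihom.adjunction (Res.obj V)).comp adj
  exact ⟨(adj1.leftAdjointUniq adj2).app W⟩
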